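/- Let M be a type, f : M → M, w : M → ℂ, and let γ ∈ (M →₀ ℂ) be nonzero with support of cardinality n. If T_{w,f}(γ) = λ·γ for some λ ∈ ℂ with λ ≠ 0, then every x in the support of γ is a periodic point of f, its order m_x satisfies 1 ≤ m_x ≤ n, and λ^{m_x} = ∏_{j=0}^{m_x−1} w(f^[j](x)). -/

import Mathlib

/-- The weighted pushforward operator `T_{w,f}` on finitely supported functions,
determined by `T_{w,f}(δ_x) = w(x) • δ_{f(x)}`. -/
noncomputable def weightedPushforward {M : Type*} (w : M → ℂ) (f : M → M) :
    (M →₀ ℂ) →ₗ[ℂ] (M →₀ ℂ) :=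
  Finsupp.lsum ℂ (fun x => w x • Finsupp.lsingle (f x))

/-- If `γ ≠ 0` has support of cardinality `n` and `T_{w,f}(γ) = λ • γ` with `λ ≠ 0`, then every
`x` in the support of `γ` is a periodic point of `f` whose order `m` satisfies `1 ≤ m ≤ n`,
and `λ^m = ∏_{j<m} w(f^[j](x))`. -/
theorem stmt2 {M : Type*} (f : M → M) (w : M → ℂ) (γ : M →₀ ℂ) (n : ℕ)
    (hγ : γ ≠ 0) (hcard : γ.support.card = n)
    (lam : ℂ) (hlam : lam ≠ 0)
    (heig : weightedPushforward w f γ = lam • γ) :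
    ∀ x ∈ γ.support, ∃ m : ℕ, 1 ≤ m ∧ m ≤ n ∧
      f^[m] x = x ∧ (∀ k, 1 ≤ k → k < m → f^[k] x ≠ x) ∧
      lam ^ m = ∏ j ∈ Finset.range m, w (f^[j] x) := by
  classical
  intro x hx
  set S := γ.support with hS
  have hT : ∀ y : M, (weightedPushforward w f γ) y
      = ∑ z ∈ S, if f z = y then w z * γ z else 0 := by
    intro y
    simp [weightedPushforward, Finsupp.lsum_apply, Finsupp.sum_apply, Finsupp.sum,
      Finsupp.single_apply, mul_comm]
    exact Finset.sum_congr rfl fun z _ => by by_cases h : f z = y <;> simp [h]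
  have hsurj : ∀ y ∈ S, ∃ z ∈ S, f z = y := by
    intro y hy
    by_contra h
    push_neg at h
    have h0 : (weightedPushforward w f γ) y = 0 := by
      rw [hT]
      exact Finset.sum_eq_zero (fun z hz => by simp [h z hz])
    rw [heig] at h0
    have : lam * γ y = 0 := by simpa using h0
    rcases mul_eq_zero.mp this with h' | h'
    · exact hlam h'
    · exact (Finsupp.mem_support_iff.mp hy) h'
  have himg : S = S.image f := by
    refine Finset.eq_of_subset_of_card_le ?_ (Finset.card_image_le)
    intro y hy
    obtain ⟨z, hz, hfz⟩ := hsurj y hy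
    exact Finset.mem_image.mpr ⟨z, hz, hfz⟩
  have hinj : Set.InjOn f S :=
    Finset.injOn_of_card_image_eq (by rw [← himg])
  have hmaps : ∀ z ∈ S, f z ∈ S := by
    intro z hz
    rw [himg]
    exact Finset.mem_image_of_mem f hz
  have hkey : ∀ z ∈ S, lam * γ (f z) = w z * γ z := by
    intro z hz
    have h1 : (weightedPushforward w f γ) (f z) = lam * γ (f z) := by
      rw [heig]; simp
    rw [hT] at h1
    rw [← h1]
    refine (Finset.sum_eq_single_of_mem z hz ?_).trans (by simp)
    intro b hb hbz
    have : f b ≠ f z := fun hc => hbz (hinj hb hz hc)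
    simp [this]
  have hiterMem : ∀ a ∈ S, ∀ k, f^[k] a ∈ S := by
    intro a ha k
    induction k with
    | zero => exact ha
    | succ k ih =>
      rw [Function.iterate_succ_apply']
      exact hmaps _ ih
  have hinjIter : ∀ k, ∀ a ∈ S, ∀ b ∈ S, f^[k] a = f^[k] b → a = b := by
    intro k
    induction k with
    | zero => intro a _ b _ h; simpa using h
    | succ k ih =>
      intro a ha b hb h
      rw [Function.iterate_succ_apply', Function.iterate_succ_apply'] at h
      exact ih a ha b hb (hinj (hiterMem a ha k) (hiterMem b hb k) h)
  have hpigeon : ∃ a ∈ Finset.range (n+1), ∃ b ∈ Finset.range (n+1),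
      a ≠ b ∧ f^[a] x = f^[b] x := by
    apply Finset.exists_ne_map_eq_of_card_lt_of_maps_to
    · rw [hcard]; simp
    · intro k _
      exact hiterMem x hx k
  obtain ⟨a, ha, b, hb, hab, hfab⟩ := hpigeon
  -- WLOG a < b
  have hper : ∃ d, 0 < d ∧ d ≤ n ∧ f^[d] x = x := by
    rcases lt_or_gt_of_ne hab with hlt | hlt
    · refine ⟨b - a, by omega, by simp at hb; omega, ?_⟩
      have : f^[a] (f^[b-a] x) = f^[a] x := by
        rw [← Function.iterate_add_apply]
        rw [show a + (b - a) = b by omega]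
        exact hfab.symm
      exact hinjIter a _ (hiterMem x hx _) x hx this
    · refine ⟨a - b, by omega, by simp at ha; omega, ?_⟩
      have : f^[b] (f^[a-b] x) = f^[b] x := by
        rw [← Function.iterate_add_apply]
        rw [show b + (a - b) = a by omega]
        exact hfab
      exact hinjIter b _ (hiterMem x hx _) x hx this
  obtain ⟨d, hd0, hdn, hdper⟩ := hper
  have hEx : ∃ m, 0 < m ∧ f^[m] x = x := ⟨d, hd0, hdper⟩
  set m := Nat.find hEx with hm
  obtain ⟨hm0, hmper⟩ := Nat.find_spec hEx
  have hmle : m ≤ d := Nat.find_min' hEx ⟨hd0, hdper⟩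
  have hmin : ∀ k, 1 ≤ k → k < m → f^[k] x ≠ x := by
    intro k hk1 hkm hc
    exact Nat.find_min hEx hkm ⟨hk1, hc⟩
  have hprod : ∀ k, lam ^ k * γ (f^[k] x)
      = (∏ j ∈ Finset.range k, w (f^[j] x)) * γ x := by
    intro k
    induction k with
    | zero => simp
    | succ k ih =>
      rw [Function.iterate_succ_apply', pow_succ, Finset.prod_range_succ]
      calc lam ^ k * lam * γ (f (f^[k] x))
          = lam ^ k * (lam * γ (f (f^[k] x))) := by ring
        _ = lam ^ k * (w (f^[k] x) * γ (f^[k] x)) := by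
            rw [hkey _ (hiterMem x hx k)]
        _ = w (f^[k] x) * (lam ^ k * γ (f^[k] x)) := by ring
        _ = (∏ j ∈ Finset.range k, w (f^[j] x)) * w (f^[k] x) * γ x := by
            rw [ih]; ring
  have hfinal : lam ^ m = ∏ j ∈ Finset.range m, w (f^[j] x) := by
    have := hprod m
    rw [hmper] at this
    exact mul_right_cancel₀ (Finsupp.mem_support_iff.mp hx) this
  exact ⟨m, hm0, le_trans hmle hdn, hmper, hmin, hfinal⟩
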